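/- For every ion configuration C = {n_{x,σ}} one has the identity H_i^0(C) = Σ_{⟨x,y⟩} φ(Q_x, Q_y) − (I·r/4)·|Λ|, where the sum runs over the edges of G, Q_x = n_x − r/2, and φ(a,b) = (W/4)(a+b)² − (W/4 − I/z)(a² + b²). -/
import Mathlib


open Finset

/-- Occupation number (0 or 1) attached to a Boolean occupancy variable. -/
noncomputable def occ (b : Bool) : ℝ := if b then 1 else 0

/-- Total number of ions at site `x` (as a real number): `n_x = Σ_σ n_{x,σ}`. -/
noncomputable def nsite {V : Type*} {r : ℕ} (C : V → Fin r → Bool) (x : V) : ℝ :=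
  ∑ σ : Fin r, occ (C x σ)

/-- Total number of ions at site `x` (as a natural number). -/
def nnat {V : Type*} {r : ℕ} (C : V → Fin r → Bool) (x : V) : ℕ :=
  ∑ σ : Fin r, (if C x σ then 1 else 0)

/-- The classical Hamiltonian
`H_i^0(C) = 2I Σ_x Σ_{σ'<σ''} (n_{x,σ'} - 1/2)(n_{x,σ''} - 1/2)
          + (W/2) Σ_{⟨x,y⟩} (n_x - r/2)(n_y - r/2)`,
where the sum over edges `⟨x,y⟩` (each edge counted once) is written as half the
symmetric double sum over ordered adjacent pairs. -/
noncomputable def H0 {V : Type*} [Fintype V] (G : SimpleGraph V) [DecidableRel G.Adj]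
    (r : ℕ) (I W : ℝ) (C : V → Fin r → Bool) : ℝ :=
  2 * I * ∑ x : V, ∑ p ∈ Finset.univ.filter (fun p : Fin r × Fin r => p.1 < p.2),
      (occ (C x p.1) - 1 / 2) * (occ (C x p.2) - 1 / 2)
  + W / 2 * ((∑ x : V, ∑ y : V,
      (if G.Adj x y then (nsite C x - r / 2) * (nsite C y - r / 2) else 0)) / 2)

/-- The nearest-neighbour bond potential
`φ(a,b) = (W/4)(a+b)² − (W/4 − I/z)(a² + b²)`. -/
noncomputable def phi (z : ℕ) (I W : ℝ) (a b : ℝ) : ℝ :=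
  W / 4 * (a + b) ^ 2 - (W / 4 - I / z) * (a ^ 2 + b ^ 2)


lemma sq_sum_aux {n : ℕ} (f : Fin n → ℝ) :
    (∑ σ, f σ)^2 = ∑ σ, (f σ)^2
      + 2 * ∑ p ∈ Finset.univ.filter (fun p : Fin n × Fin n => p.1 < p.2), f p.1 * f p.2 := by
  have h : (∑ σ, f σ)^2 = ∑ p : Fin n × Fin n, f p.1 * f p.2 := by
    rw [sq, Fintype.sum_mul_sum, ← Finset.univ_product_univ, Finset.sum_product]
  rw [h,
    ← Finset.sum_filter_add_sum_filter_not Finset.univ (fun p : Fin n × Fin n => p.1 < p.2),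
    ← Finset.sum_filter_add_sum_filter_not
      (Finset.univ.filter fun p : Fin n × Fin n => ¬ p.1 < p.2) (fun p => p.2 < p.1),
    Finset.filter_filter, Finset.filter_filter]
  have h1 : ∑ p ∈ Finset.univ.filter (fun p : Fin n × Fin n => ¬p.1 < p.2 ∧ p.2 < p.1),
      f p.1 * f p.2
      = ∑ p ∈ Finset.univ.filter (fun p : Fin n × Fin n => p.1 < p.2), f p.1 * f p.2 := by
    apply Finset.sum_nbij' (fun p => Prod.swap p) (fun p => Prod.swap p) <;>
      simp +contextual [mul_comm, lt_asymm, le_of_lt]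
  have h2 : ∑ p ∈ Finset.univ.filter (fun p : Fin n × Fin n => ¬p.1 < p.2 ∧ ¬p.2 < p.1),
      f p.1 * f p.2 = ∑ i, (f i)^2 := by
    apply Finset.sum_nbij' Prod.fst (fun i => (i, i))
    · simp
    · simp
    · intro p hp
      simp only [Finset.mem_filter, not_lt] at hp
      have : p.1 = p.2 := le_antisymm hp.2.2 hp.2.1
      exact Prod.ext rfl this
    · simp
    · intro p hp
      simp only [Finset.mem_filter, not_lt] at hp
      have : p.2 = p.1 := le_antisymm hp.2.1 hp.2.2
      rw [this, sq]
  rw [h1, h2]; ring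

/-- For every ion configuration `C`,
`H_i^0(C) = Σ_{⟨x,y⟩} φ(Q_x, Q_y) − (I·r/4)·|Λ|`, where `Q_x = n_x − r/2`. -/
theorem statement0
    {V : Type*} [Fintype V] [DecidableEq V]
    (G : SimpleGraph V) [DecidableRel G.Adj]
    (z r : ℕ) (hz : 2 ≤ z) (hr : 2 ≤ r)
    (hreg : G.IsRegularOfDegree z) (hconn : G.Connected)
    (Λe Λo : Finset V)
    (hcover : ∀ v : V, v ∈ Λe ∨ v ∈ Λo) (hdisj : Disjoint Λe Λo)
    (hbip : ∀ x y : V, G.Adj x y → (x ∈ Λe ∧ y ∈ Λo) ∨ (x ∈ Λo ∧ y ∈ Λe))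
    (I W : ℝ) (C : V → Fin r → Bool) :
    H0 G r I W C =
      (∑ x : V, ∑ y : V,
        (if G.Adj x y then phi z I W (nsite C x - r / 2) (nsite C y - r / 2) else 0)) / 2
      - I * r / 4 * (Fintype.card V) := by
  classical
  have hz0 : (z : ℝ) ≠ 0 := by
    have : 0 < z := by omega
    exact_mod_cast this.ne'
  set Q : V → ℝ := fun x => nsite C x - r / 2 with hQdef
  -- on-site term
  have onsite : ∀ x : V,
      ∑ p ∈ Finset.univ.filter (fun p : Fin r × Fin r => p.1 < p.2),
        (occ (C x p.1) - 1 / 2) * (occ (C x p.2) - 1 / 2)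
      = ((Q x) ^ 2 - r / 4) / 2 := by
    intro x
    have hsum : (∑ σ : Fin r, (occ (C x σ) - 1 / 2)) = Q x := by
      rw [Finset.sum_sub_distrib]
      simp [nsite, Q]
      ring
    have hsq : (∑ σ : Fin r, (occ (C x σ) - 1 / 2) ^ 2) = (r : ℝ) / 4 := by
      have h4 : ∀ σ : Fin r, (occ (C x σ) - 1 / 2) ^ 2 = (1 : ℝ) / 4 := by
        intro σ; cases hb : C x σ <;> simp [occ] <;> ring
      calc ∑ σ : Fin r, (occ (C x σ) - 1 / 2) ^ 2
          = ∑ _σ : Fin r, (1 : ℝ) / 4 := Finset.sum_congr rfl fun σ _ => h4 σ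
        _ = (r : ℝ) / 4 := by
            rw [Finset.sum_const, Finset.card_univ, Fintype.card_fin]
            simp [nsmul_eq_mul]; ring
    have := sq_sum_aux (fun σ => occ (C x σ) - 1 / 2)
    rw [hsum, hsq] at this
    linarith
  -- degree sums
  have hdeg : ∀ (x : V) (c : ℝ), (∑ y : V, if G.Adj x y then c else 0) = z * c := by
    intro x c
    rw [← Finset.sum_filter]
    have hnb : (Finset.univ.filter (fun y => G.Adj x y)) = G.neighborFinset x := by
      ext y; simp [SimpleGraph.mem_neighborFinset]
    rw [hnb, Finset.sum_const]
    have hd : (G.neighborFinset x).card = z := hreg x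
    rw [hd]
    simp [nsmul_eq_mul]
  have hphi : ∀ a b : ℝ, phi z I W a b
      = W / 2 * (a * b) + I / z * a ^ 2 + I / z * b ^ 2 := by
    intro a b; unfold phi; ring
  -- split the RHS double sum
  have hsplit : (∑ x : V, ∑ y : V, (if G.Adj x y then phi z I W (Q x) (Q y) else 0))
      = W / 2 * (∑ x : V, ∑ y : V, (if G.Adj x y then Q x * Q y else 0))
        + 2 * I * ∑ x : V, (Q x) ^ 2 := by
    have e1 : ∀ x y : V, (if G.Adj x y then phi z I W (Q x) (Q y) else 0)
        = (if G.Adj x y then W / 2 * (Q x * Q y) else 0)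
          + (if G.Adj x y then I / z * (Q x) ^ 2 else 0)
          + (if G.Adj x y then I / z * (Q y) ^ 2 else 0) := by
      intro x y
      by_cases h : G.Adj x y <;> simp [h, hphi]
    simp_rw [e1, Finset.sum_add_distrib]
    have e2 : (∑ x : V, ∑ y : V, (if G.Adj x y then I / z * (Q x) ^ 2 else 0))
        = I * ∑ x : V, (Q x) ^ 2 := by
      rw [Finset.mul_sum]
      refine Finset.sum_congr rfl fun x _ => ?_
      rw [hdeg x (I / z * (Q x) ^ 2)]
      field_simp
    have e3 : (∑ x : V, ∑ y : V, (if G.Adj x y then I / z * (Q y) ^ 2 else 0))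
        = I * ∑ x : V, (Q x) ^ 2 := by
      rw [Finset.sum_comm]
      rw [Finset.mul_sum]
      refine Finset.sum_congr rfl fun y _ => ?_
      have hcomm : ∀ x : V, (if G.Adj x y then I / z * (Q y) ^ 2 else 0)
          = (if G.Adj y x then I / z * (Q y) ^ 2 else 0) := by
        intro x; simp only [SimpleGraph.adj_comm]
      rw [Finset.sum_congr rfl fun x _ => hcomm x, hdeg y (I / z * (Q y) ^ 2)]
      field_simp
    have e4 : (∑ x : V, ∑ y : V, (if G.Adj x y then W / 2 * (Q x * Q y) else 0))
        = W / 2 * (∑ x : V, ∑ y : V, (if G.Adj x y then Q x * Q y else 0)) := by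
      simp_rw [Finset.mul_sum, mul_ite, mul_zero]
    rw [e2, e3, e4]; ring
  -- assemble
  unfold H0
  rw [Finset.sum_congr rfl fun x _ => onsite x]
  have hQ2 : (∑ x : V, ((Q x) ^ 2 - (r : ℝ) / 4) / 2)
      = (∑ x : V, (Q x) ^ 2) / 2 - (Fintype.card V : ℝ) * ((r : ℝ) / 8) := by
    calc ∑ x : V, ((Q x) ^ 2 - (r : ℝ) / 4) / 2
        = ∑ x : V, ((Q x) ^ 2 / 2 - (r : ℝ) / 8) :=
          Finset.sum_congr rfl fun x _ => by ring
      _ = (∑ x : V, (Q x) ^ 2) / 2 - (Fintype.card V : ℝ) * ((r : ℝ) / 8) := by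
          rw [Finset.sum_sub_distrib, Finset.sum_const, Finset.card_univ, nsmul_eq_mul,
            Finset.sum_div]
  rw [hQ2]
  rw [show (∑ x : V, ∑ y : V,
        (if G.Adj x y then phi z I W (nsite C x - r / 2) (nsite C y - r / 2) else 0))
      = (∑ x : V, ∑ y : V, (if G.Adj x y then phi z I W (Q x) (Q y) else 0)) from rfl]
  rw [hsplit]
  rw [show (∑ x : V, ∑ y : V,
        (if G.Adj x y then (nsite C x - r / 2) * (nsite C y - r / 2) else 0))
      = (∑ x : V, ∑ y : V, (if G.Adj x y then Q x * Q y else 0)) from rfl]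
  generalize (∑ x : V, ∑ y : V, (if G.Adj x y then Q x * Q y else 0)) = S
  generalize (∑ x : V, (Q x) ^ 2) = T
  ring
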